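/- Let k ≥ 1 and let G be a graph on n vertices containing no complete subgraph K_{k+1}, and set t := ex(n, K_{k+1}) − e(G), where ex(n, K_{k+1}) is the maximum number of edges of a K_{k+1}-free graph on n vertices. Then there is a map f : V(G) → {1, …, k} such that the number of edges {u, v} of G with f(u) = f(v) is at most t; in other words, G can be made k-partite by deleting at most t edges. -/

import Mathlib

open SimpleGraph Set

/-- The Turán number `ex(n, K_{k+1})`: the maximum number of edges of a `K_{k+1}`-free
graph on `n` vertices. -/
noncomputable def turanEx (n k : ℕ) : ℕ :=
  sSup {m | ∃ G : SimpleGraph (Fin n), G.CliqueFree (k+1) ∧ G.edgeSet.ncard = m}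

private lemma edgeSet_map' {α β : Type*} (f : α ↪ β) (G : SimpleGraph α) :
    (G.map f).edgeSet = Sym2.map f '' G.edgeSet := by
  ext e
  induction e using Sym2.ind with
  | _ u v =>
  simp only [mem_edgeSet, map_adj, Set.mem_image]
  constructor
  · rintro ⟨a, b, hab, rfl, rfl⟩
    exact ⟨s(a,b), hab, rfl⟩
  · rintro ⟨e', he', hmap⟩
    induction e' using Sym2.ind with
    | _ a b =>
    rw [Sym2.map_pair_eq, Sym2.eq_iff] at hmap
    rcases hmap with ⟨rfl, rfl⟩ | ⟨rfl, rfl⟩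
    exacts [⟨a, b, he', rfl, rfl⟩, ⟨b, a, he'.symm, rfl, rfl⟩]

private lemma ncard_edgeSet_map {α β : Type*} (f : α ↪ β) (G : SimpleGraph α) :
    (G.map f).edgeSet.ncard = G.edgeSet.ncard := by
  rw [edgeSet_map', Set.ncard_image_of_injective _ (Sym2.map.injective f.injective)]

private lemma turan_bddAbove (n k : ℕ) :
    BddAbove {m | ∃ G : SimpleGraph (Fin n), G.CliqueFree (k+1) ∧ G.edgeSet.ncard = m} := by
  classical
  refine ⟨n.choose 2, ?_⟩
  rintro m ⟨G, -, rfl⟩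
  rw [← SimpleGraph.coe_edgeFinset, Set.ncard_coe_finset]
  simpa using G.card_edgeFinset_le_card_choose_two

private lemma le_turanEx {W : Type*} [Fintype W] {n k : ℕ} (hW : Fintype.card W = n)
    (H : SimpleGraph W) (hH : H.CliqueFree (k+1)) : H.edgeSet.ncard ≤ turanEx n k := by
  classical
  let e : W ≃ Fin n := Fintype.equivFinOfCardEq hW
  refine le_csSup (turan_bddAbove n k) ⟨H.map e.toEmbedding, ?_, (ncard_edgeSet_map _ _)⟩
  cases isEmpty_or_nonempty W
  · have hn : n = 0 := by rw [← hW]; exact Fintype.card_eq_zero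
    exact cliqueFree_of_card_lt (by simp [hn])
  · rwa [cliqueFree_map_iff]

private lemma turan_attained (n k : ℕ) (hk : 1 ≤ k) :
    ∃ H : SimpleGraph (Fin n), H.CliqueFree (k+1) ∧ H.edgeSet.ncard = turanEx n k := by
  have h0 : (0:ℕ) ∈ {m | ∃ G : SimpleGraph (Fin n), G.CliqueFree (k+1) ∧ G.edgeSet.ncard = m} :=
    ⟨⊥, cliqueFree_bot (by omega), by simp⟩
  exact Nat.sSup_mem ⟨0, h0⟩ (turan_bddAbove n k)

section Graphs
variable {V : Type} (G : SimpleGraph V) (N : Finset V)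

private def monoGraph {k : ℕ} (f : V → Fin k) : SimpleGraph V where
  Adj u v := G.Adj u v ∧ f u = f v
  symm := ⟨fun u v h => ⟨h.1.symm, h.2.symm⟩⟩
  loopless := ⟨fun v h => G.irrefl h.1⟩

private def inGraph : SimpleGraph V where
  Adj u v := G.Adj u v ∧ u ∈ N ∧ v ∈ N
  symm := ⟨fun u v h => ⟨h.1.symm, h.2.2, h.2.1⟩⟩
  loopless := ⟨fun v h => G.irrefl h.1⟩

private def outGraph : SimpleGraph V where
  Adj u v := G.Adj u v ∧ (u ∉ N ∨ v ∉ N)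
  symm := ⟨fun u v h => ⟨h.1.symm, h.2.symm⟩⟩
  loopless := ⟨fun v h => G.irrefl h.1⟩

private def ioGraph : SimpleGraph V where
  Adj u v := G.Adj u v ∧ ((u ∈ N ∧ v ∉ N) ∨ (u ∉ N ∧ v ∈ N))
  symm := ⟨fun u v h => ⟨h.1.symm, by tauto⟩⟩
  loopless := ⟨fun v h => G.irrefl h.1⟩

private def ooGraph : SimpleGraph V where
  Adj u v := G.Adj u v ∧ u ∉ N ∧ v ∉ N
  symm := ⟨fun u v h => ⟨h.1.symm, h.2.2, h.2.1⟩⟩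
  loopless := ⟨fun v h => G.irrefl h.1⟩

private def bipGraph : SimpleGraph V where
  Adj u v := (u ∈ N ∧ v ∉ N) ∨ (u ∉ N ∧ v ∈ N)
  symm := ⟨fun u v h => by tauto⟩
  loopless := ⟨fun v h => by tauto⟩

private lemma G_eq_in_sup_out : G = inGraph G N ⊔ outGraph G N := by
  ext u v
  simp only [inGraph, outGraph, sup_adj]
  tauto

private lemma out_eq_io_sup_oo : outGraph G N = ioGraph G N ⊔ ooGraph G N := by
  ext u v
  simp only [outGraph, ioGraph, ooGraph, sup_adj]
  tauto

private lemma disjoint_in_out : Disjoint (inGraph G N) (outGraph G N) := by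
  rw [disjoint_iff]
  ext u v
  simp only [inGraph, outGraph, inf_adj, bot_adj]
  tauto

private lemma disjoint_io_oo : Disjoint (ioGraph G N) (ooGraph G N) := by
  rw [disjoint_iff]
  ext u v
  simp only [ioGraph, ooGraph, inf_adj, bot_adj]
  tauto

private lemma ncard_sup_of_disjoint {G₁ G₂ : SimpleGraph V} [Fintype V] (h : Disjoint G₁ G₂) :
    (G₁ ⊔ G₂).edgeSet.ncard = G₁.edgeSet.ncard + G₂.edgeSet.ncard := by
  rw [edgeSet_sup, Set.ncard_union_eq (by rwa [SimpleGraph.disjoint_edgeSet])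
    (Set.toFinite _) (Set.toFinite _)]

end Graphs

private lemma ncard_edgeSet_eq_card_edgeFinset {V : Type} (G : SimpleGraph V) [Fintype G.edgeSet] :
    G.edgeSet.ncard = G.edgeFinset.card := by
  rw [Set.ncard_eq_toFinset_card', SimpleGraph.edgeFinset]

section Counting
variable {V : Type} [Fintype V]

private lemma ncard_bipGraph (N : Finset V) :
    (bipGraph N : SimpleGraph V).edgeSet.ncard = N.card * (Fintype.card V - N.card) := by
  classical
  have hhs := SimpleGraph.sum_degrees_eq_twice_card_edges (bipGraph N)
  have hsplit := Finset.sum_add_sum_compl N (fun v => (bipGraph N).degree v)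
  have e1 : ∀ v ∈ N, (bipGraph N).degree v = Fintype.card V - N.card := by
    intro v hv
    rw [SimpleGraph.degree]
    have : (bipGraph N).neighborFinset v = Nᶜ := by
      ext u
      rw [mem_neighborFinset]; simp only [Finset.mem_compl, bipGraph]
      tauto
    rw [this, Finset.card_compl]
  have e2 : ∀ v ∈ Nᶜ, (bipGraph N).degree v = N.card := by
    intro v hv
    rw [SimpleGraph.degree]
    have hv' : v ∉ N := Finset.mem_compl.mp hv
    have : (bipGraph N).neighborFinset v = N := by
      ext u
      rw [mem_neighborFinset]; simp only [bipGraph]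
      tauto
    rw [this]
  have h1 : ∑ v ∈ N, (bipGraph N).degree v = N.card * (Fintype.card V - N.card) := by
    rw [Finset.sum_congr rfl e1, Finset.sum_const, smul_eq_mul]
  have h2 : ∑ v ∈ Nᶜ, (bipGraph N).degree v = (Fintype.card V - N.card) * N.card := by
    rw [Finset.sum_congr rfl e2, Finset.sum_const, smul_eq_mul, Finset.card_compl]
  have hAB : N.card * (Fintype.card V - N.card) = (Fintype.card V - N.card) * N.card :=
    Nat.mul_comm _ _
  have hcard := ncard_edgeSet_eq_card_edgeFinset (bipGraph N : SimpleGraph V)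
  omega

private lemma claimA (G : SimpleGraph V) (N : Finset V) {D : ℕ}
    (hdeg : ∀ v : V, (G.neighborSet v).ncard ≤ D) :
    (ioGraph G N).edgeSet.ncard + 2 * (ooGraph G N).edgeSet.ncard
      ≤ (Fintype.card V - N.card) * D := by
  classical
  have hoo : 2 * (ooGraph G N).edgeSet.ncard = ∑ v ∈ Nᶜ, (ooGraph G N).degree v := by
    have hhs := SimpleGraph.sum_degrees_eq_twice_card_edges (ooGraph G N)
    have hsplit := Finset.sum_add_sum_compl N (fun v => (ooGraph G N).degree v)
    have hN0 : ∑ v ∈ N, (ooGraph G N).degree v = 0 := by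
      refine Finset.sum_eq_zero fun v hv => ?_
      rw [SimpleGraph.degree, Finset.card_eq_zero]
      ext u
      rw [mem_neighborFinset]; simp only [Finset.notMem_empty, iff_false, ooGraph]
      tauto
    have hcard := ncard_edgeSet_eq_card_edgeFinset (ooGraph G N)
    omega
  have hio : (ioGraph G N).edgeSet.ncard ≤ ∑ v ∈ Nᶜ, (ioGraph G N).degree v := by
    set P : Finset (V × V) :=
      Nᶜ.biUnion (fun v => ((ioGraph G N).neighborFinset v).image (fun u => (v, u))) with hP
    have hPcard : P.card = ∑ v ∈ Nᶜ, (ioGraph G N).degree v := by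
      rw [hP, Finset.card_biUnion]
      · exact Finset.sum_congr rfl fun v _ =>
          Finset.card_image_of_injective _ (fun a b h => by simpa using congrArg Prod.snd h)
      · intro a _ b _ hab
        rw [Function.onFun, Finset.disjoint_left]
        rintro p hp1 hp2
        obtain ⟨u1, -, rfl⟩ := Finset.mem_image.mp hp1
        obtain ⟨u2, -, h2⟩ := Finset.mem_image.mp hp2
        exact hab (by simpa using (congrArg Prod.fst h2).symm)
    have hsurj : ((ioGraph G N).edgeFinset).card ≤ P.card := by
      apply Finset.card_le_card_of_surjOn (fun p : V × V => s(p.1, p.2))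
      intro e he
      induction e using Sym2.ind with
      | _ a b =>
      rw [Finset.mem_coe, mem_edgeFinset, mem_edgeSet] at he
      obtain ⟨hadj, hcase⟩ := he
      rcases hcase with ⟨haN, hbN⟩ | ⟨haN, hbN⟩
      · refine ⟨(b, a), ?_, Sym2.eq_swap⟩
        refine Finset.mem_coe.mpr (Finset.mem_biUnion.mpr ⟨b, Finset.mem_compl.mpr hbN,
          Finset.mem_image.mpr ⟨a, ?_, rfl⟩⟩)
        rw [mem_neighborFinset]
        exact ⟨hadj.symm, Or.inr ⟨hbN, haN⟩⟩
      · refine ⟨(a, b), ?_, rfl⟩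
        refine Finset.mem_coe.mpr (Finset.mem_biUnion.mpr ⟨a, Finset.mem_compl.mpr haN,
          Finset.mem_image.mpr ⟨b, ?_, rfl⟩⟩)
        rw [mem_neighborFinset]
        exact ⟨hadj, Or.inr ⟨haN, hbN⟩⟩
    have hcard := ncard_edgeSet_eq_card_edgeFinset (ioGraph G N)
    omega
  have hdsum : ∀ v ∈ Nᶜ, (ioGraph G N).degree v + (ooGraph G N).degree v ≤ D := by
    intro v _
    have hsub : (ioGraph G N).neighborFinset v ∪ (ooGraph G N).neighborFinset v
        ⊆ G.neighborFinset v := by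
      intro u hu
      rw [Finset.mem_union, mem_neighborFinset, mem_neighborFinset] at hu
      rw [mem_neighborFinset]
      rcases hu with h | h
      · exact h.1
      · exact h.1
    have hdisj : Disjoint ((ioGraph G N).neighborFinset v) ((ooGraph G N).neighborFinset v) := by
      rw [Finset.disjoint_left]
      intro u hu1 hu2
      rw [mem_neighborFinset] at hu1 hu2
      simp only [ioGraph, ooGraph] at hu1 hu2
      tauto
    have h1 := Finset.card_union_of_disjoint hdisj
    have h2 := Finset.card_le_card hsub
    have h3 : (G.neighborFinset v).card = (G.neighborSet v).ncard := by
      rw [Set.ncard_eq_toFinset_card', SimpleGraph.neighborFinset]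
    have := hdeg v
    unfold SimpleGraph.degree
    omega
  calc (ioGraph G N).edgeSet.ncard + 2 * (ooGraph G N).edgeSet.ncard
      ≤ ∑ v ∈ Nᶜ, (ioGraph G N).degree v + ∑ v ∈ Nᶜ, (ooGraph G N).degree v := by omega
    _ = ∑ v ∈ Nᶜ, ((ioGraph G N).degree v + (ooGraph G N).degree v) := by
        rw [Finset.sum_add_distrib]
    _ ≤ Nᶜ.card * D := by
        simpa using Finset.sum_le_card_nsmul _ _ _ hdsum
    _ = (Fintype.card V - N.card) * D := by rw [Finset.card_compl]

private lemma claimB (N : Finset V) (m : ℕ) :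
    turanEx N.card (m+1) + N.card * (Fintype.card V - N.card)
      ≤ turanEx (Fintype.card V) (m+2) := by
  classical
  obtain ⟨H0, hH0free, hH0card⟩ := turan_attained N.card (m+1) (by omega)
  let ι : Fin N.card ↪ V := (N.equivFin.symm.toEmbedding).trans (Function.Embedding.subtype _)
  have hι : ∀ a, ι a ∈ N := fun a => (N.equivFin.symm a).2
  set K : SimpleGraph V := H0.map ι ⊔ bipGraph N with hK
  have hdisj : Disjoint (H0.map ι) (bipGraph N : SimpleGraph V) := by
    rw [disjoint_iff]
    ext u v
    simp only [inf_adj, bot_adj, map_adj, bipGraph, iff_false, not_and]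
    rintro ⟨a, b, -, rfl, rfl⟩ hbip
    rcases hbip with ⟨h1, h2⟩ | ⟨h1, h2⟩
    exacts [h2 (hι b), h1 (hι a)]
  have hKcard : K.edgeSet.ncard
      = turanEx N.card (m+1) + N.card * (Fintype.card V - N.card) := by
    rw [hK, ncard_sup_of_disjoint hdisj, ncard_edgeSet_map, hH0card, ncard_bipGraph]
  have hmapfree : (H0.map ι).CliqueFree (m+2) := by
    cases isEmpty_or_nonempty (Fin N.card) with
    | inl h =>
      intro t ht
      have h2 : 1 < t.card := by rw [ht.2]; omega
      obtain ⟨a, ha, b, hb, hab⟩ := Finset.one_lt_card.mp h2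
      obtain ⟨a', -, -⟩ := (map_adj _ _ _ _).mp (ht.1 ha hb hab)
      exact isEmptyElim a'
    | inr h => exact (cliqueFree_map_iff).mpr hH0free
  have hKfree : K.CliqueFree (m+3) := by
    intro s hs
    have hsN : (s \ N).card ≤ 1 := by
      rw [Finset.card_le_one]
      intro a ha b hb
      by_contra hne
      rw [Finset.mem_sdiff] at ha hb
      have hadj : K.Adj a b := hs.1 (Finset.mem_coe.mpr ha.1) (Finset.mem_coe.mpr hb.1) hne
      rcases hadj with hmap | hbip
      · obtain ⟨-, a', b', -, rfl, rfl⟩ := hmap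
        exact ha.2 (hι a')
      · rcases hbip with ⟨h1, -⟩ | ⟨-, h2⟩
        exacts [ha.2 h1, hb.2 h2]
    have hcards : (s ∩ N).card + (s \ N).card = s.card :=
      Finset.card_inter_add_card_sdiff s N
    have hge : m + 2 ≤ (s ∩ N).card := by
      have := hs.2
      omega
    have hclique : (H0.map ι).IsNClique ((s ∩ N).card) (s ∩ N) := by
      refine ⟨?_, rfl⟩
      intro a ha b hb hne
      rw [Finset.mem_coe, Finset.mem_inter] at ha hb
      have hadj : K.Adj a b := hs.1 (Finset.mem_coe.mpr ha.1) (Finset.mem_coe.mpr hb.1) hne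
      rcases hadj with hmap | hbip
      · exact hmap
      · exfalso
        rcases hbip with ⟨-, h2⟩ | ⟨h1, -⟩
        exacts [h2 hb.2, h1 ha.2]
    exact (hmapfree.mono hge) _ hclique
  have hle := le_turanEx rfl K hKfree
  omega

end Counting

private lemma induce_cliqueFree_of_adj {V : Type} (G : SimpleGraph V) {n : ℕ}
    (hfree : G.CliqueFree (n+1)) (x : V) (N : Finset V) (hN : ∀ u ∈ N, G.Adj x u) :
    (G.induce (↑N : Set V)).CliqueFree n := by
  classical
  intro t ht
  have h1 := ht.map (f := Function.Embedding.subtype _)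
  have hle : (G.induce (↑N : Set V)).map (Function.Embedding.subtype _) ≤ G := by
    rintro u v ⟨-, a, b, hab, rfl, rfl⟩
    exact hab
  have h2 : G.IsNClique n (t.map (Function.Embedding.subtype _)) := h1.mono hle
  apply hfree (insert x (t.map (Function.Embedding.subtype _)))
  refine h2.insert ?_
  intro b hb
  obtain ⟨a, ha, rfl⟩ := Finset.mem_map.mp hb
  exact hN ↑a a.2

private lemma inGraph_eq_map {V : Type} (G : SimpleGraph V) (N : Finset V) :
    (G.induce (↑N : Set V)).map (Function.Embedding.subtype _) = inGraph G N := by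
  ext u v
  simp only [map_adj, comap_adj, inGraph]
  constructor
  · rintro ⟨a, b, hab, rfl, rfl⟩
    exact ⟨hab, a.2, b.2⟩
  · rintro ⟨h, hu, hv⟩
    exact ⟨⟨u, hu⟩, ⟨v, hv⟩, h, rfl, rfl⟩

private lemma monoGraph_decomp {V : Type} (G : SimpleGraph V) (N : Finset V)
    [∀ v : V, Decidable (v ∈ N)] {m : ℕ}
    (g : ↥(↑N : Set V) → Fin (m+1)) :
    monoGraph G (fun v => if h : v ∈ N then (g ⟨v, h⟩).castSucc else Fin.last (m+1))
      = (monoGraph (G.induce (↑N : Set V)) g).map (Function.Embedding.subtype _)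
        ⊔ ooGraph G N := by
  ext u v
  simp only [monoGraph, map_adj, sup_adj, comap_adj, Function.Embedding.coe_subtype, ooGraph]
  constructor
  · rintro ⟨hadj, heq⟩
    by_cases hu : u ∈ N <;> by_cases hv : v ∈ N
    · rw [dif_pos hu, dif_pos hv, Fin.castSucc_inj] at heq
      exact Or.inl ⟨hadj.ne, ⟨u, hu⟩, ⟨v, hv⟩, ⟨hadj, heq⟩, rfl, rfl⟩
    · rw [dif_pos hu, dif_neg hv] at heq
      exact absurd heq (Fin.castSucc_lt_last _).ne
    · rw [dif_neg hu, dif_pos hv] at heq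
      exact absurd heq.symm (Fin.castSucc_lt_last _).ne
    · exact Or.inr ⟨hadj, hu, hv⟩
  · rintro (⟨-, a, b, ⟨hadj, heq⟩, rfl, rfl⟩ | ⟨hadj, hu, hv⟩)
    · refine ⟨hadj, ?_⟩
      rw [dif_pos (show ↑a ∈ N from a.2), dif_pos (show ↑b ∈ N from b.2), Fin.castSucc_inj]
      exact heq
    · exact ⟨hadj, by rw [dif_neg hu, dif_neg hv]⟩

private lemma monoSet_eq {V : Type} (G : SimpleGraph V) {k : ℕ} (f : V → Fin k) :
    {e ∈ G.edgeSet | ∃ u v : V, e = s(u, v) ∧ f u = f v} = (monoGraph G f).edgeSet := by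
  ext e
  induction e using Sym2.ind with
  | _ a b =>
  simp only [Set.mem_setOf_eq, mem_edgeSet, monoGraph]
  constructor
  · rintro ⟨hadj, u, v, heq, hfeq⟩
    rw [Sym2.eq_iff] at heq
    rcases heq with ⟨rfl, rfl⟩ | ⟨rfl, rfl⟩
    exacts [⟨hadj, hfeq⟩, ⟨hadj, hfeq.symm⟩]
  · rintro ⟨hadj, hfeq⟩
    exact ⟨hadj, a, b, rfl, hfeq⟩

private lemma furedi_aux : ∀ (m : ℕ) {V : Type} [Fintype V] (G : SimpleGraph V),
    G.CliqueFree (m+2) → ∃ f : V → Fin (m+1),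
      (monoGraph G f).edgeSet.ncard + G.edgeSet.ncard ≤ turanEx (Fintype.card V) (m+1) := by
  intro m
  induction m with
  | zero =>
    intro V _ G hfree
    refine ⟨fun _ => 0, ?_⟩
    have hbot : G = ⊥ := cliqueFree_two.mp hfree
    subst hbot
    have h1 : (monoGraph (⊥ : SimpleGraph V) (fun _ => (0 : Fin 1))) = ⊥ := by
      ext u v
      simp [monoGraph]
    rw [h1]
    simp
  | succ m IH =>
    intro V _ G hfree
    classical
    cases isEmpty_or_nonempty V with
    | inl hV =>
      refine ⟨fun v => isEmptyElim v, ?_⟩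
      have h0 : ∀ (H : SimpleGraph V), H.edgeSet = ∅ := fun H => Set.eq_empty_of_isEmpty _
      rw [h0, h0]
      simp
    | inr hV =>
      obtain ⟨x, -, hx⟩ := Finset.exists_max_image Finset.univ (fun v => G.degree v)
        ⟨Classical.arbitrary V, Finset.mem_univ _⟩
      set N : Finset V := G.neighborFinset x with hN
      set D : ℕ := G.degree x with hD
      have hDcard : N.card = D := rfl
      have hNadj : ∀ u ∈ N, G.Adj x u := fun u hu => (mem_neighborFinset _ _ _).mp hu
      have hNfree : (G.induce (↑N : Set V)).CliqueFree (m+2) :=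
        induce_cliqueFree_of_adj G hfree x N hNadj
      have hcardN : Fintype.card ↥(↑N : Set V) = D := by
        rw [← Set.toFinset_card, Finset.toFinset_coe]
        exact hDcard
      obtain ⟨g, hg⟩ := IH (G.induce (↑N : Set V)) hNfree
      rw [hcardN] at hg
      refine ⟨fun v => if h : v ∈ N then (g ⟨v, h⟩).castSucc else Fin.last (m+1), ?_⟩
      have hdeg : ∀ v : V, (G.neighborSet v).ncard ≤ D := by
        intro v
        have h1 : (G.neighborSet v).ncard = G.degree v := by
          rw [Set.ncard_eq_toFinset_card', SimpleGraph.degree, SimpleGraph.neighborFinset]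
        rw [h1]
        exact hx v (Finset.mem_univ v)
      have hA := claimA G N hdeg
      have hB := claimB N m
      rw [hDcard] at hA hB
      have hout : (outGraph G N).edgeSet.ncard
          = (ioGraph G N).edgeSet.ncard + (ooGraph G N).edgeSet.ncard := by
        conv_lhs => rw [out_eq_io_sup_oo G N]
        exact ncard_sup_of_disjoint (disjoint_io_oo G N)
      have hGsplit : G.edgeSet.ncard
          = (inGraph G N).edgeSet.ncard + (outGraph G N).edgeSet.ncard := by
        conv_lhs => rw [G_eq_in_sup_out G N]
        exact ncard_sup_of_disjoint (disjoint_in_out G N)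
      have hdisjM : Disjoint
          ((monoGraph (G.induce (↑N : Set V)) g).map (Function.Embedding.subtype _))
          (ooGraph G N) := by
        rw [disjoint_iff]
        ext u v
        simp only [inf_adj, bot_adj, map_adj, ooGraph, iff_false, not_and]
        rintro ⟨a, b, -, rfl, rfl⟩ - h1
        exact (h1 a.2).elim
      have hMsplit : (monoGraph G
            (fun v => if h : v ∈ N then (g ⟨v, h⟩).castSucc else Fin.last (m+1))).edgeSet.ncard
          = (monoGraph (G.induce (↑N : Set V)) g).edgeSet.ncard
            + (ooGraph G N).edgeSet.ncard := by
        rw [monoGraph_decomp G N g, ncard_sup_of_disjoint hdisjM, ncard_edgeSet_map]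
      have hIn : (inGraph G N).edgeSet.ncard = (G.induce (↑N : Set V)).edgeSet.ncard := by
        rw [← inGraph_eq_map G N, ncard_edgeSet_map]
      have hcomm : (Fintype.card V - D) * D = D * (Fintype.card V - D) := Nat.mul_comm _ _
      show _ + _ ≤ turanEx (Fintype.card V) (m+2)
      omega

theorem furedi_stability {k n : ℕ} (hk : 1 ≤ k) {V : Type} [Fintype V]
    (hV : Fintype.card V = n) (G : SimpleGraph V)
    (hfree : G.CliqueFree (k+1)) (t : ℕ)
    (ht : t = turanEx n k - G.edgeSet.ncard) :
    ∃ f : V → Fin k,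
      {e ∈ G.edgeSet | ∃ u v : V, e = s(u, v) ∧ f u = f v}.ncard ≤ t := by
  obtain ⟨m, rfl⟩ : ∃ m, k = m + 1 := ⟨k - 1, by omega⟩
  subst hV
  subst ht
  obtain ⟨f, hf⟩ := furedi_aux m G hfree
  refine ⟨f, ?_⟩
  rw [monoSet_eq G f]
  exact Nat.le_sub_of_add_le hf
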